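/- arXiv:1210.0650 — 2 statements merged into one kernel-verified Lean document; each statement's English description precedes it below -/
import Mathlib

section
/- Let |W⟩ = (|001⟩ + |010⟩ + |100⟩)/√3 in (ℂ²)^{⊗3}, let |+⟩ = (|0⟩+|1⟩)/√2 and |−⟩ = (|0⟩−|1⟩)/√2. Then for every assignment of the three bras ⟨0|, ⟨+|, ⟨−| to the three tensor positions (i.e. for every permutation π of the three slots), the amplitude obtained by contracting |W⟩ with ⟨0| in slot π(1), ⟨+| in slot π(2) and ⟨−| in slot π(3) is zero. Consequently, whenever one party measures in the z-basis obtaining |0⟩ and the other two measure in the x-basis, the two x-outcomes always agree, so the pairwise quantum key distribution protocol with W₃ is correct. -/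
open TensorProduct

noncomputable section

/-- ℂ², the complex Hilbert space with computational basis `e 0`, `e 1`. -/
abbrev V : Type := Fin 2 → ℂ

/-- The computational basis vectors `|0⟩`, `|1⟩` of ℂ². -/
def e (i : Fin 2) : V := Pi.single i 1

/-- The bra `⟨b|`, the dual basis functional to `|b⟩`. -/
def bra (b : Fin 2) : V →ₗ[ℂ] ℂ := LinearMap.proj b

/-- The bra `⟨+| = (⟨0| + ⟨1|)/√2`. -/
def braPlus : V →ₗ[ℂ] ℂ := (Real.sqrt 2 : ℂ)⁻¹ • (bra 0 + bra 1)

/-- The bra `⟨−| = (⟨0| − ⟨1|)/√2`. -/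
def braMinus : V →ₗ[ℂ] ℂ := (Real.sqrt 2 : ℂ)⁻¹ • (bra 0 - bra 1)

/-- The W-state `(|001⟩ + |010⟩ + |100⟩)/√3` in `(ℂ²)^{⊗3}`. -/
def W : V ⊗[ℂ] (V ⊗[ℂ] V) :=
  (Real.sqrt 3 : ℂ)⁻¹ •
    (e 0 ⊗ₜ[ℂ] (e 0 ⊗ₜ[ℂ] e 1) + e 0 ⊗ₜ[ℂ] (e 1 ⊗ₜ[ℂ] e 0) + e 1 ⊗ₜ[ℂ] (e 0 ⊗ₜ[ℂ] e 0))

/-- Full contraction of the three tensor slots with functionals `f`, `g`, `h`,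
giving the measurement amplitude `⟨f|⟨g|⟨h|ψ⟩ ∈ ℂ`. -/
def contract3 (f g h : V →ₗ[ℂ] ℂ) : V ⊗[ℂ] (V ⊗[ℂ] V) →ₗ[ℂ] ℂ :=
  (TensorProduct.lid ℂ ℂ).toLinearMap ∘ₗ
    TensorProduct.map f
      ((TensorProduct.lid ℂ ℂ).toLinearMap ∘ₗ TensorProduct.map g h)

/-- The three bras `⟨0|`, `⟨+|`, `⟨−|` to be distributed over the three slots. -/
def bras : Fin 3 → (V →ₗ[ℂ] ℂ) := ![bra 0, braPlus, braMinus]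


lemma contract3_W (f g h : V →ₗ[ℂ] ℂ) :
    contract3 f g h W = (Real.sqrt 3 : ℂ)⁻¹ *
      (f (e 0) * (g (e 0) * h (e 1)) + f (e 0) * (g (e 1) * h (e 0)) +
        f (e 1) * (g (e 0) * h (e 0))) := by
  simp [contract3, W, TensorProduct.map_tmul, smul_eq_mul, mul_add]

@[simp] lemma bra_e (i j : Fin 2) : bra i (e j) = if i = j then 1 else 0 := by
  simp [bra, e, Pi.single_apply]

/-- Correctness of pairwise QKD with W₃: for every assignment of the bras
`⟨0|, ⟨+|, ⟨−|` to the three tensor slots (i.e. for every permutation of the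
slots), the resulting amplitude against the W-state is zero.  Hence when the
decider's z-outcome is `|0⟩`, the two x-outcomes always agree. -/
theorem w_qkd_correct :
    ∀ π : Equiv.Perm (Fin 3),
      contract3 (bras (π 0)) (bras (π 1)) (bras (π 2)) W = 0 := by
  intro π
  have h01 : π 0 ≠ π 1 := fun h => by simpa using π.injective h
  have h02 : π 0 ≠ π 2 := fun h => by simpa using π.injective h
  have h12 : π 1 ≠ π 2 := fun h => by simpa using π.injective h
  generalize π 0 = a at *
  generalize π 1 = b at *
  generalize π 2 = c at *
  fin_cases a <;> fin_cases b <;> fin_cases c <;>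
    simp_all [contract3_W, bras, braPlus, braMinus, smul_eq_mul, Equiv.swap_apply_def,
      Fin.ext_iff]
end
end

section
/- Fix N ≥ 2. For s ∈ {0,1} and x : {2,…,N} → {0,1}, define the N-qubit GHZ-class state |GHZ^N_{s,x}⟩ := (|0, x₂, …, x_N⟩ + (−1)^s |1, 1−x₂, …, 1−x_N⟩)/√2 in (ℂ²)^{⊗N}. Let U_N be the composite of the CNOT gates with control the first qubit and target the k-th qubit for k = 2, …, N, followed by the Hadamard gate on the first qubit. Then U_N |GHZ^N_{s,x}⟩ = |s, x₂, …, x_N⟩ for all s and x. Hence the N-qubit GHZ measurement circuit decodes 2^N distinguishable GHZ-class states into N classical bits, validating superdense coding with N-GHZ. -/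
noncomputable section

/-- The N-qubit state space `(ℂ²)^{⊗N}`, realised as the space of functions on
the computational basis `Fin N → Fin 2`. -/
abbrev QState (N : ℕ) : Type := (Fin N → Fin 2) → ℂ

/-- the basis vector `|b₁,…,b_N⟩` of `(ℂ²)^{⊗N}`. -/
def ket {N : ℕ} (b : Fin N → Fin 2) : QState N := Pi.single b 1

lemma prod_cnot_apply {N : ℕ} [NeZero N] (CNOT : Fin N → Module.End ℂ (QState N))
    (hC : ∀ k : Fin N, k ≠ 0 → ∀ b : Fin N → Fin 2,
      CNOT k (ket b) = ket (Function.update b k (b 0 + b k))) :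
    ∀ (L : List (Fin N)), L.Nodup → (∀ k ∈ L, k ≠ 0) → ∀ b : Fin N → Fin 2,
      ((L.map CNOT).prod) (ket b) =
        ket (fun k => if k ∈ L then b 0 + b k else b k) := by
  intro L
  induction L with
  | nil =>
    intro _ _ b
    simp only [List.map_nil, List.prod_nil, Module.End.one_apply, List.not_mem_nil,
      if_false]
  | cons k L ih =>
    intro hnd hne b
    have hk0 : k ≠ 0 := hne k (List.mem_cons_self)
    have hkL : k ∉ L := (List.nodup_cons.mp hnd).1
    have h0L : (0 : Fin N) ∉ L := fun h => (hne 0 (List.mem_cons_of_mem _ h)) rfl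
    rw [List.map_cons, List.prod_cons, Module.End.mul_apply,
      ih (List.nodup_cons.mp hnd).2 (fun j hj => hne j (List.mem_cons_of_mem _ hj)) b,
      hC k hk0]
    have hfun : Function.update (fun j => if j ∈ L then b 0 + b j else b j) k
        ((if (0:Fin N) ∈ L then b 0 + b 0 else b 0) + if k ∈ L then b 0 + b k else b k)
        = fun j => if j ∈ k :: L then b 0 + b j else b j := by
      funext j
      by_cases hj : j = k
      · subst hj
        simp [Function.update_self, h0L, hkL]
      · rw [Function.update_of_ne hj]
        by_cases hjL : j ∈ L <;> simp [hjL, hj]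
    rw [hfun]


/-- Validity of superdense coding with the N-qubit GHZ state: let `CNOT k`
(for `k ≠ 0`) be the controlled-not with control the first qubit and target
the k-th qubit, and `H1` the Hadamard on the first qubit.  Then the circuit
`U_N = H1 ∘ (CNOT₂ ∘ ⋯ ∘ CNOT_N)` maps each N-qubit GHZ-class state
`|GHZ^N_{s,x}⟩ = (|0,x₂,…,x_N⟩ + (−1)^s |1,1−x₂,…,1−x_N⟩)/√2` to the
computational basis state `|s,x₂,…,x_N⟩`, decoding the `2^N` distinguishable
GHZ-class states into N classical bits. -/
theorem sdc_nghz_valid (N : ℕ) [NeZero N] (hN : 2 ≤ N)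
    (CNOT : Fin N → Module.End ℂ (QState N))
    (H1 : Module.End ℂ (QState N))
    (hC : ∀ k : Fin N, k ≠ 0 → ∀ b : Fin N → Fin 2,
      CNOT k (ket b) = ket (Function.update b k (b 0 + b k)))
    (hH : ∀ b : Fin N → Fin 2,
      H1 (ket b) = (Real.sqrt 2 : ℂ)⁻¹ •
        (ket (Function.update b 0 0) +
          ((-1 : ℂ))^((b 0 : ℕ)) • ket (Function.update b 0 1))) :
    ∀ (s : Fin 2) (x : Fin N → Fin 2),
      (H1 * (((List.finRange N).filter (fun k => k ≠ 0)).map CNOT).prod)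
        ((Real.sqrt 2 : ℂ)⁻¹ •
          (ket (Function.update x 0 0) +
            ((-1 : ℂ))^(s : ℕ) • ket (fun k => if k = 0 then 1 else 1 - x k))) =
      ket (Function.update x 0 s) := by
  intro s x
  set L := (List.finRange N).filter (fun k => k ≠ 0) with hL
  have hmem : ∀ k : Fin N, k ∈ L ↔ k ≠ 0 := by
    intro k; simp [hL, List.mem_filter]
  have hnd : L.Nodup := (List.nodup_finRange N).filter _
  have hne : ∀ k ∈ L, k ≠ 0 := fun k hk => (hmem k).mp hk
  have key := prod_cnot_apply CNOT hC L hnd hne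
  have hPA : ((L.map CNOT).prod) (ket (Function.update x 0 0)) =
      ket (Function.update x 0 0) := by
    rw [key]
    have : (fun k => if k ∈ L then (Function.update x 0 0) 0 + (Function.update x 0 0) k
        else (Function.update x 0 0) k) = Function.update x 0 0 := by
      funext k
      by_cases hk : k ∈ L <;> simp [hk]
    rw [this]
  have hPB : ((L.map CNOT).prod) (ket (fun k => if k = 0 then 1 else 1 - x k)) =
      ket (Function.update x 0 1) := by
    rw [key]
    have : (fun k => if k ∈ L then
          (if (0:Fin N) = 0 then (1:Fin 2) else 1 - x 0) + (if k = 0 then 1 else 1 - x k)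
          else (if k = 0 then 1 else 1 - x k)) = Function.update x 0 1 := by
      funext k
      by_cases hk0 : k = 0
      · subst hk0
        have : (0:Fin N) ∉ L := fun h => hne 0 h rfl
        simp [this]
      · have hk : k ∈ L := (hmem k).mpr hk0
        have h2 : ∀ a : Fin 2, (1 : Fin 2) + (1 - a) = a := by decide
        simp [hk, hk0, Function.update_of_ne hk0, h2]
    rw [this]
  have h00 : Function.update (Function.update x 0 (0:Fin 2)) 0 (0:Fin 2)
      = Function.update x 0 0 := Function.update_idem ..
  have h01 : Function.update (Function.update x 0 (0:Fin 2)) 0 (1:Fin 2)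
      = Function.update x 0 1 := Function.update_idem ..
  have h10 : Function.update (Function.update x 0 (1:Fin 2)) 0 (0:Fin 2)
      = Function.update x 0 0 := Function.update_idem ..
  have h11 : Function.update (Function.update x 0 (1:Fin 2)) 0 (1:Fin 2)
      = Function.update x 0 1 := Function.update_idem ..
  have e0 : (((Function.update x 0 (0:Fin 2)) 0 : Fin 2) : ℕ) = 0 := by simp
  have e1 : (((Function.update x 0 (1:Fin 2)) 0 : Fin 2) : ℕ) = 1 := by simp
  have h2 : ((Real.sqrt 2 : ℝ) : ℂ) * ((Real.sqrt 2 : ℝ) : ℂ) = 2 := by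
    norm_cast
    exact Real.mul_self_sqrt (by norm_num)
  have hσ : ((Real.sqrt 2 : ℝ) : ℂ)⁻¹ * ((Real.sqrt 2 : ℝ) : ℂ)⁻¹ = 2⁻¹ := by
    rw [← mul_inv, h2]
  simp only [Module.End.mul_apply, map_smul, map_add, hPA, hPB, hH, h00, h01, h10, h11,
    e0, e1, pow_zero, pow_one]
  fin_cases s
  · simp only [Fin.mk_zero, Fin.mk_one, Fin.val_zero, pow_zero]
    match_scalars
    · linear_combination 2 * hσ
    · ring
  · simp only [Fin.mk_zero, Fin.mk_one, Fin.val_one, pow_one]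
    match_scalars
    · ring
    · linear_combination 2 * hσ
end
end
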